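/- Let p, q be real numbers with p ≥ 3, q ≥ 3 and c := 1 − 2/p − 2/q > 0, and set a := ((p−2)/p)·√(1 − 4/((p−2)·(q−2))). Then 2a/(a+1) ≥ q·(p−2)·c / (q·(p−1)·c + 1). -/

import Mathlib

/-- for `p, q ≥ 3` with `c := 1 − 2/p − 2/q > 0` and
`a := ((p−2)/p)·√(1 − 4/((p−2)(q−2)))`, one has `2a/(a+1) ≥ q(p−2)c/(q(p−1)c + 1)`. -/
theorem statement_10 (p q : ℝ) (hp : 3 ≤ p) (hq : 3 ≤ q)
    (c : ℝ) (hc : c = 1 - 2 / p - 2 / q) (hcpos : 0 < c)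
    (a : ℝ) (ha : a = ((p - 2) / p) * Real.sqrt (1 - 4 / ((p - 2) * (q - 2)))) :
    q * (p - 2) * c / (q * (p - 1) * c + 1) ≤ 2 * a / (a + 1) := by
  have hp0 : (0:ℝ) < p := by linarith
  have hq0 : (0:ℝ) < q := by linarith
  have ht0 : 0 < p * q * c := by positivity
  have htc : p * q * c = p * q - 2 * q - 2 * p := by
    rw [hc]; field_simp
  set t := p * q * c with ht
  have hpq : (p - 2) * (q - 2) = t + 4 := by rw [htc]; ring
  have ht4 : 0 < t + 4 := by linarith
  have ht2 : 0 < t + 2 := by linarith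
  have hs : 1 - 4 / ((p - 2) * (q - 2)) = t / (t + 4) := by
    rw [hpq]; field_simp; ring
  have hsq : t / (t + 2) ≤ Real.sqrt (t / (t + 4)) := by
    rw [Real.le_sqrt (by positivity) (by positivity)]
    rw [div_pow, div_le_div_iff₀ (by positivity) ht4]
    nlinarith [ht0.le]
  have hfrac : (0:ℝ) ≤ (p - 2) / p := div_nonneg (by linarith) hp0.le
  have haL : (p - 2) / p * (t / (t + 2)) ≤ a := by
    rw [ha, hs]
    exact mul_le_mul_of_nonneg_left hsq hfrac
  have hkey : (p - 2) * q * c ≤ a * (t + 2) := by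
    have : (p - 2) / p * (t / (t + 2)) = (p - 2) * q * c / (t + 2) := by
      rw [ht]; field_simp
    rw [this] at haL
    exact (div_le_iff₀ ht2).mp haL
  have ha0 : 0 ≤ a := by
    have : (0:ℝ) ≤ (p - 2) * q * c := by nlinarith
    nlinarith
  have hd1 : 0 < q * (p - 1) * c + 1 := by nlinarith
  have hd2 : 0 < a + 1 := by linarith
  rw [div_le_div_iff₀ hd1 hd2]
  nlinarith [hkey, ht, hcpos.le]
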